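/- Let $r:\mathbb{N}\to\mathbb{R}\setminus\{0\}$, $a,b:\mathbb{N}\to\mathbb{R}$ satisfy $\sum_{s=1}^{\infty}|1/r_s|\sum_{t=s}^{\infty}|a_t|<\infty$ and $\sum_{s=1}^{\infty}|1/r_s|\sum_{t=s}^{\infty}|b_t|<\infty$. Let $q:\mathbb{N}\to\mathbb{R}$ with $\sup_n|q_n|=q^\star<1$, let $\tau\in\mathbb{N}\cup\{0\}$, $\sigma\in\mathbb{Z}$, and let $f:\mathbb{R}\to\mathbb{R}$ be locally Lipschitz. Then there exist $k\in\mathbb{N}$ and a bounded sequence $x:\mathbb{N}_k\to\mathbb{R}$ satisfying $\Delta(r_n\Delta(x_n+q_nx_{n-\tau}))=a_nf(x_{n-\sigma})+b_n$ for all $n\ge k$. -/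

import Mathlib

open Filter Topology




lemma auxSummableTail {v : ℕ → ℝ} (h : Summable v) (m : ℕ) :
    Summable (fun t => v (m + t)) :=
  ((summable_nat_add_iff m).2 h).congr (fun b => by rw [add_comm])

lemma auxTailRec {v : ℕ → ℝ} (h : Summable v) (m : ℕ) :
    ∑' t : ℕ, v (m + t) = v m + ∑' t : ℕ, v (m + 1 + t) := by
  have h1 : ∑' (t : ℕ), v (m + t) = v (m + 0) + ∑' (b : ℕ), v (m + (b + 1)) :=
    Summable.tsum_eq_zero_add (auxSummableTail h m)
  have h2 : ∑' (b : ℕ), v (m + (b + 1)) = ∑' (b : ℕ), v (m + 1 + b) :=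
    tsum_congr fun b => congrArg v (by omega)
  rw [h1, h2]
  norm_num

lemma auxTailMono {v : ℕ → ℝ} (h : Summable v) (hv : ∀ n, 0 ≤ v n) {k n : ℕ} (hkn : k ≤ n) :
    ∑' t : ℕ, v (n + t) ≤ ∑' t : ℕ, v (k + t) := by
  have key := Summable.sum_add_tsum_nat_add (f := fun t => v (k + t)) (n - k) (auxSummableTail h k)
  beta_reduce at key
  have h2 : (∑' i : ℕ, v (k + (i + (n - k)))) = ∑' t : ℕ, v (n + t) :=
    tsum_congr fun i => congrArg v (by omega)
  rw [h2] at key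
  have h3 : 0 ≤ ∑ i ∈ Finset.range (n - k), v (k + i) :=
    Finset.sum_nonneg fun i _ => hv _
  linarith

lemma auxTailTendsto (v : ℕ → ℝ) :
    Tendsto (fun k => ∑' t : ℕ, v (k + t)) atTop (𝓝 0) := by
  have he : (fun k => ∑' t : ℕ, v (k + t)) = fun i => ∑' t : ℕ, v (t + i) :=
    funext fun k => tsum_congr fun t => by rw [add_comm]
  rw [he]; exact tendsto_sum_nat_add v

lemma auxTsumAbsLe {v w : ℕ → ℝ} (hw : Summable w) (hvw : ∀ n, |v n| ≤ w n) (m : ℕ) :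
    |∑' t : ℕ, v (m + t)| ≤ ∑' t : ℕ, w (m + t) := by
  have hv : Summable (fun t => v (m + t)) :=
    Summable.of_norm_bounded (g := fun t => w (m + t)) (auxSummableTail hw m)
      (fun t => by simpa [Real.norm_eq_abs] using hvw (m + t))
  have h1 : ‖∑' t : ℕ, v (m + t)‖ ≤ ∑' t : ℕ, ‖v (m + t)‖ :=
    norm_tsum_le_tsum_norm (by simpa using hv.abs)
  simp only [Real.norm_eq_abs] at h1
  exact h1.trans (Summable.tsum_le_tsum (fun t => hvw (m + t)) hv.abs (auxSummableTail hw m))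

/-- the nonlinearity -/
def gg (a b : ℕ → ℝ) (σ : ℤ) (f : ℝ → ℝ) (z : ℕ → ℝ) (t : ℕ) : ℝ :=
  a t * f (z ((t : ℤ) - σ).toNat) + b t

noncomputable def GG (a b : ℕ → ℝ) (σ : ℤ) (f : ℝ → ℝ) (z : ℕ → ℝ) (m : ℕ) : ℝ :=
  ∑' t : ℕ, gg a b σ f z (m + t)

noncomputable def uu (r a b : ℕ → ℝ) (σ : ℤ) (f : ℝ → ℝ) (z : ℕ → ℝ) (s : ℕ) : ℝ :=
  (1 / r s) * GG a b σ f z s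

noncomputable def SS (r a b : ℕ → ℝ) (σ : ℤ) (f : ℝ → ℝ) (z : ℕ → ℝ) (n : ℕ) : ℝ :=
  ∑' s : ℕ, uu r a b σ f z (n + s)

noncomputable def va (r a : ℕ → ℝ) (s : ℕ) : ℝ := |1 / r s| * ∑' t : ℕ, |a (s + t)|

noncomputable def AA (r a : ℕ → ℝ) (n : ℕ) : ℝ := ∑' s : ℕ, va r a (n + s)

section model

variable {r a b : ℕ → ℝ} {σ : ℤ} {f : ℝ → ℝ} {M C Kr d : ℝ} {z z' : ℕ → ℝ}

lemma va_nonneg (r a : ℕ → ℝ) (s : ℕ) : 0 ≤ va r a s :=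
  mul_nonneg (abs_nonneg _) (tsum_nonneg fun _ => abs_nonneg _)

lemma gg_bound (hC : ∀ u : ℝ, |u| ≤ M → |f u| ≤ C)
    (hz : ∀ m, |z m| ≤ M) (t : ℕ) :
    |gg a b σ f z t| ≤ C * |a t| + |b t| := by
  have h1 : |f (z ((t : ℤ) - σ).toNat)| ≤ C := hC _ (hz _)
  calc |a t * f (z ((t : ℤ) - σ).toNat) + b t|
      ≤ |a t * f (z ((t : ℤ) - σ).toNat)| + |b t| := abs_add_le _ _
    _ = |a t| * |f (z ((t : ℤ) - σ).toNat)| + |b t| := by rw [abs_mul]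
    _ ≤ C * |a t| + |b t| := by nlinarith [abs_nonneg (a t)]

lemma gg_summable (ha : Summable fun t => |a t|) (hb : Summable fun t => |b t|)
    (hC : ∀ u : ℝ, |u| ≤ M → |f u| ≤ C) (hz : ∀ m, |z m| ≤ M) :
    Summable (gg a b σ f z) :=
  Summable.of_norm_bounded (g := fun t => C * |a t| + |b t|) ((ha.mul_left C).add hb)
    (fun t => by simpa [Real.norm_eq_abs] using gg_bound hC hz t)

lemma GG_rec (ha : Summable fun t => |a t|) (hb : Summable fun t => |b t|)
    (hC : ∀ u : ℝ, |u| ≤ M → |f u| ≤ C) (hz : ∀ m, |z m| ≤ M) (m : ℕ) :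
    GG a b σ f z m = gg a b σ f z m + GG a b σ f z (m + 1) :=
  auxTailRec (gg_summable ha hb hC hz) m

lemma GG_bound (ha : Summable fun t => |a t|) (hb : Summable fun t => |b t|)
    (hC : ∀ u : ℝ, |u| ≤ M → |f u| ≤ C) (hz : ∀ m, |z m| ≤ M) (m : ℕ) :
    |GG a b σ f z m| ≤ C * (∑' t : ℕ, |a (m + t)|) + ∑' t : ℕ, |b (m + t)| := by
  have h1 := auxTsumAbsLe (v := gg a b σ f z) (w := fun t => C * |a t| + |b t|)
    ((ha.mul_left C).add hb) (gg_bound hC hz) m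
  have h2 : (∑' t : ℕ, (C * |a (m + t)| + |b (m + t)|))
      = C * (∑' t : ℕ, |a (m + t)|) + ∑' t : ℕ, |b (m + t)| := by
    rw [Summable.tsum_add ((auxSummableTail ha m).mul_left C) (auxSummableTail hb m), tsum_mul_left]
  calc |GG a b σ f z m| ≤ ∑' t : ℕ, (C * |a (m + t)| + |b (m + t)|) := h1
    _ = _ := h2

lemma uu_bound (ha : Summable fun t => |a t|) (hb : Summable fun t => |b t|)
    (hC : ∀ u : ℝ, |u| ≤ M → |f u| ≤ C) (hz : ∀ m, |z m| ≤ M) (s : ℕ) :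
    |uu r a b σ f z s| ≤ C * va r a s + va r b s := by
  unfold uu va
  rw [abs_mul]
  calc |1 / r s| * |GG a b σ f z s|
      ≤ |1 / r s| * (C * (∑' t : ℕ, |a (s + t)|) + ∑' t : ℕ, |b (s + t)|) :=
        mul_le_mul_of_nonneg_left (GG_bound ha hb hC hz s) (abs_nonneg _)
    _ = C * (|1 / r s| * ∑' t : ℕ, |a (s + t)|) + |1 / r s| * ∑' t : ℕ, |b (s + t)| := by ring

lemma uu_summable (ha : Summable fun t => |a t|) (hb : Summable fun t => |b t|)
    (hsa : Summable (va r a)) (hsb : Summable (va r b))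
    (hC : ∀ u : ℝ, |u| ≤ M → |f u| ≤ C) (hz : ∀ m, |z m| ≤ M) :
    Summable (uu r a b σ f z) :=
  Summable.of_norm_bounded (g := fun s => C * va r a s + va r b s) ((hsa.mul_left C).add hsb)
    (fun s => by simpa [Real.norm_eq_abs] using uu_bound ha hb hC hz s)

lemma SS_rec (ha : Summable fun t => |a t|) (hb : Summable fun t => |b t|)
    (hsa : Summable (va r a)) (hsb : Summable (va r b))
    (hC : ∀ u : ℝ, |u| ≤ M → |f u| ≤ C) (hz : ∀ m, |z m| ≤ M) (n : ℕ) :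
    SS r a b σ f z n = uu r a b σ f z n + SS r a b σ f z (n + 1) :=
  auxTailRec (uu_summable ha hb hsa hsb hC hz) n

lemma SS_bound (ha : Summable fun t => |a t|) (hb : Summable fun t => |b t|)
    (hsa : Summable (va r a)) (hsb : Summable (va r b))
    (hC : ∀ u : ℝ, |u| ≤ M → |f u| ≤ C) (hz : ∀ m, |z m| ≤ M) (n : ℕ) :
    |SS r a b σ f z n| ≤ C * AA r a n + AA r b n := by
  have h1 := auxTsumAbsLe (v := uu r a b σ f z) (w := fun s => C * va r a s + va r b s)
    ((hsa.mul_left C).add hsb) (uu_bound ha hb hC hz) n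
  have h2 : (∑' s : ℕ, (C * va r a (n + s) + va r b (n + s)))
      = C * AA r a n + AA r b n := by
    unfold AA
    rw [Summable.tsum_add ((auxSummableTail hsa n).mul_left C) (auxSummableTail hsb n), tsum_mul_left]
  calc |SS r a b σ f z n| ≤ ∑' s : ℕ, (C * va r a (n + s) + va r b (n + s)) := h1
    _ = _ := h2

lemma gg_lip (hLip : ∀ u u' : ℝ, |u| ≤ M → |u'| ≤ M → |f u - f u'| ≤ Kr * |u - u'|)
    (hK0 : 0 ≤ Kr) (hd0 : 0 ≤ d)
    (hz : ∀ m, |z m| ≤ M) (hz' : ∀ m, |z' m| ≤ M)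
    (hd : ∀ m, |z m - z' m| ≤ d) (t : ℕ) :
    |gg a b σ f z t - gg a b σ f z' t| ≤ (Kr * d) * |a t| := by
  have key : gg a b σ f z t - gg a b σ f z' t
      = a t * (f (z ((t : ℤ) - σ).toNat) - f (z' ((t : ℤ) - σ).toNat)) := by
    unfold gg; ring
  rw [key, abs_mul]
  have h1 : |f (z ((t : ℤ) - σ).toNat) - f (z' ((t : ℤ) - σ).toNat)|
      ≤ Kr * |z ((t : ℤ) - σ).toNat - z' ((t : ℤ) - σ).toNat| := hLip _ _ (hz _) (hz' _)
  have h2 : |z ((t : ℤ) - σ).toNat - z' ((t : ℤ) - σ).toNat| ≤ d := hd _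
  have h3 : Kr * |z ((t : ℤ) - σ).toNat - z' ((t : ℤ) - σ).toNat| ≤ Kr * d :=
    mul_le_mul_of_nonneg_left h2 hK0
  calc |a t| * |f (z ((t : ℤ) - σ).toNat) - f (z' ((t : ℤ) - σ).toNat)|
      ≤ |a t| * (Kr * d) := mul_le_mul_of_nonneg_left (h1.trans h3) (abs_nonneg _)
    _ = (Kr * d) * |a t| := mul_comm _ _

lemma GG_lip (ha : Summable fun t => |a t|) (hb : Summable fun t => |b t|)
    (hC : ∀ u : ℝ, |u| ≤ M → |f u| ≤ C)
    (hLip : ∀ u u' : ℝ, |u| ≤ M → |u'| ≤ M → |f u - f u'| ≤ Kr * |u - u'|)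
    (hK0 : 0 ≤ Kr) (hd0 : 0 ≤ d)
    (hz : ∀ m, |z m| ≤ M) (hz' : ∀ m, |z' m| ≤ M)
    (hd : ∀ m, |z m - z' m| ≤ d) (m : ℕ) :
    |GG a b σ f z m - GG a b σ f z' m| ≤ (Kr * d) * ∑' t : ℕ, |a (m + t)| := by
  have hdiff := Summable.tsum_sub (f := fun t => gg a b σ f z (m + t)) (g := fun t => gg a b σ f z' (m + t))
    (auxSummableTail (gg_summable ha hb hC hz) m)
    (auxSummableTail (gg_summable ha hb hC hz') m)
  have h1 := auxTsumAbsLe (v := fun t => gg a b σ f z t - gg a b σ f z' t)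
    (w := fun t => (Kr * d) * |a t|) (ha.mul_left (Kr * d))
    (gg_lip hLip hK0 hd0 hz hz' hd) m
  rw [hdiff] at h1
  calc |GG a b σ f z m - GG a b σ f z' m|
      ≤ ∑' t : ℕ, (Kr * d) * |a (m + t)| := h1
    _ = (Kr * d) * ∑' t : ℕ, |a (m + t)| := tsum_mul_left

lemma uu_lip (ha : Summable fun t => |a t|) (hb : Summable fun t => |b t|)
    (hC : ∀ u : ℝ, |u| ≤ M → |f u| ≤ C)
    (hLip : ∀ u u' : ℝ, |u| ≤ M → |u'| ≤ M → |f u - f u'| ≤ Kr * |u - u'|)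
    (hK0 : 0 ≤ Kr) (hd0 : 0 ≤ d)
    (hz : ∀ m, |z m| ≤ M) (hz' : ∀ m, |z' m| ≤ M)
    (hd : ∀ m, |z m - z' m| ≤ d) (s : ℕ) :
    |uu r a b σ f z s - uu r a b σ f z' s| ≤ (Kr * d) * va r a s := by
  have key : uu r a b σ f z s - uu r a b σ f z' s
      = (1 / r s) * (GG a b σ f z s - GG a b σ f z' s) := by unfold uu; ring
  rw [key, abs_mul]
  unfold va
  calc |1 / r s| * |GG a b σ f z s - GG a b σ f z' s|
      ≤ |1 / r s| * ((Kr * d) * ∑' t : ℕ, |a (s + t)|) :=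
        mul_le_mul_of_nonneg_left (GG_lip ha hb hC hLip hK0 hd0 hz hz' hd s) (abs_nonneg _)
    _ = (Kr * d) * (|1 / r s| * ∑' t : ℕ, |a (s + t)|) := by ring

lemma SS_lip (ha : Summable fun t => |a t|) (hb : Summable fun t => |b t|)
    (hsa : Summable (va r a)) (hsb : Summable (va r b))
    (hC : ∀ u : ℝ, |u| ≤ M → |f u| ≤ C)
    (hLip : ∀ u u' : ℝ, |u| ≤ M → |u'| ≤ M → |f u - f u'| ≤ Kr * |u - u'|)
    (hK0 : 0 ≤ Kr) (hd0 : 0 ≤ d)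
    (hz : ∀ m, |z m| ≤ M) (hz' : ∀ m, |z' m| ≤ M)
    (hd : ∀ m, |z m - z' m| ≤ d) (n : ℕ) :
    |SS r a b σ f z n - SS r a b σ f z' n| ≤ (Kr * d) * AA r a n := by
  have hdiff := Summable.tsum_sub (f := fun s => uu r a b σ f z (n + s)) (g := fun s => uu r a b σ f z' (n + s))
    (auxSummableTail (uu_summable ha hb hsa hsb hC hz) n)
    (auxSummableTail (uu_summable ha hb hsa hsb hC hz') n)
  have h1 := auxTsumAbsLe (v := fun s => uu r a b σ f z s - uu r a b σ f z' s)
    (w := fun s => (Kr * d) * va r a s) (hsa.mul_left (Kr * d))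
    (uu_lip ha hb hC hLip hK0 hd0 hz hz' hd) n
  rw [hdiff] at h1
  calc |SS r a b σ f z n - SS r a b σ f z' n|
      ≤ ∑' s : ℕ, (Kr * d) * va r a (n + s) := h1
    _ = (Kr * d) * AA r a n := tsum_mul_left

lemma AA_mono (hsa : Summable (va r a)) {k n : ℕ} (hkn : k ≤ n) :
    AA r a n ≤ AA r a k :=
  auxTailMono hsa (va_nonneg r a) hkn

lemma AA_nonneg (r a : ℕ → ℝ) (n : ℕ) : 0 ≤ AA r a n :=
  tsum_nonneg fun _ => va_nonneg r a _

lemma AA_tendsto (r a : ℕ → ℝ) : Tendsto (AA r a) atTop (𝓝 0) :=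
  auxTailTendsto (va r a)

end model

noncomputable def Phi (r a b q : ℕ → ℝ) (σ : ℤ) (f : ℝ → ℝ) (τ k : ℕ) (z : ℕ → ℝ) (n : ℕ) : ℝ :=
  -(q (max n k)) * z (max n k - τ) + SS r a b σ f z (max n k)

/-- Existence of a bounded solution to
`Δ(r n * Δ(x n + q n * x (n-τ))) = a n * f (x (n-σ)) + b n`
under summability of the iterated tail series and `sup |q n| = q⋆ < 1`. -/
theorem stmt_0 (r a b q : ℕ → ℝ) (τ : ℕ) (σ : ℤ) (f : ℝ → ℝ)
    (hr : ∀ n, r n ≠ 0)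
    (ha : Summable fun t => |a t|) (hb : Summable fun t => |b t|)
    (hsa : Summable fun s => |1 / r s| * ∑' t : ℕ, |a (s + t)|)
    (hsb : Summable fun s => |1 / r s| * ∑' t : ℕ, |b (s + t)|)
    (qstar : ℝ) (hq : ∀ n, |q n| ≤ qstar) (hq1 : qstar < 1)
    (hf : LocallyLipschitz f) :
    ∃ k : ℕ, τ ≤ k ∧ σ ≤ (k : ℤ) ∧
      ∃ x : ℕ → ℝ, (∃ M : ℝ, ∀ n ≥ k, |x n| ≤ M) ∧
        ∀ n ≥ k,
          (r (n + 1) *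
              ((x (n + 2) + q (n + 2) * x (n + 2 - τ)) -
                (x (n + 1) + q (n + 1) * x (n + 1 - τ))) -
            r n *
              ((x (n + 1) + q (n + 1) * x (n + 1 - τ)) -
                (x n + q n * x (n - τ)))) =
            a n * f (x ((n : ℤ) - σ).toNat) + b n := by
  classical
  obtain ⟨K0, U, hU, hKU⟩ := hf 0
  obtain ⟨ε, hε, hball⟩ := Metric.mem_nhds_iff.1 hU
  have hK : LipschitzOnWith K0 f (Metric.ball (0:ℝ) ε) := hKU.mono hball
  set M : ℝ := ε / 2 with hMdef
  have hM : 0 < M := by positivity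
  have hmem : ∀ u : ℝ, |u| ≤ M → u ∈ Metric.ball (0:ℝ) ε := by
    intro u hu
    simp only [Metric.mem_ball, Real.dist_eq, sub_zero]
    calc |u| ≤ M := hu
      _ < ε := by rw [hMdef]; linarith
  set Kr : ℝ := (K0 : ℝ) with hKrdef
  have hK0 : (0:ℝ) ≤ Kr := K0.coe_nonneg
  have hLip : ∀ u u' : ℝ, |u| ≤ M → |u'| ≤ M → |f u - f u'| ≤ Kr * |u - u'| := by
    intro u u' hu hu'
    have := hK.dist_le_mul u (hmem u hu) u' (hmem u' hu')
    simpa [Real.dist_eq] using this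
  set C : ℝ := |f 0| + Kr * M with hCdef
  have hC0 : 0 ≤ C := by positivity
  have hC : ∀ u : ℝ, |u| ≤ M → |f u| ≤ C := by
    intro u hu
    have h1 := hLip u 0 hu (by simpa using hM.le)
    have h3 : |f u| - |f 0| ≤ |f u - f 0| := abs_sub_abs_le_abs_sub _ _
    have h4 : |u - 0| ≤ M := by simpa using hu
    have h5 : Kr * |u - 0| ≤ Kr * M := mul_le_mul_of_nonneg_left h4 hK0
    rw [hCdef]; linarith
  have hq0 : 0 ≤ qstar := (abs_nonneg (q 0)).trans (hq 0)
  have hsa' : Summable (va r a) := hsa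
  have hsb' : Summable (va r b) := hsb
  have hev1 : ∀ᶠ n in Filter.atTop, C * AA r a n + AA r b n < (1 - qstar) * M := by
    have ht : Filter.Tendsto (fun n => C * AA r a n + AA r b n) Filter.atTop (nhds 0) := by
      simpa using ((AA_tendsto r a).const_mul C).add (AA_tendsto r b)
    exact ht.eventually_lt_const (by nlinarith)
  have hev2 : ∀ᶠ n in Filter.atTop, Kr * AA r a n < (1 - qstar) / 2 := by
    have ht : Filter.Tendsto (fun n => Kr * AA r a n) Filter.atTop (nhds 0) := by
      simpa using (AA_tendsto r a).const_mul Kr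
    exact ht.eventually_lt_const (by linarith)
  obtain ⟨k, ⟨hkA, hkK⟩, hkm⟩ :=
    ((hev1.and hev2).and (Filter.eventually_ge_atTop (max τ σ.toNat))).exists
  have hkτ : τ ≤ k := le_trans (le_max_left _ _) hkm
  have hkσ : σ ≤ (k:ℤ) := by
    have h1 : σ.toNat ≤ k := le_trans (le_max_right _ _) hkm
    exact (Int.self_le_toNat σ).trans (by exact_mod_cast h1)
  refine ⟨k, hkτ, hkσ, ?_⟩
  haveI hcs : CompleteSpace ↥(Metric.closedBall (0 : BoundedContinuousFunction ℕ ℝ) M) :=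
    Metric.isClosed_closedBall.completeSpace_coe
  haveI hne : Nonempty ↥(Metric.closedBall (0 : BoundedContinuousFunction ℕ ℝ) M) :=
    ⟨⟨0, Metric.mem_closedBall_self hM.le⟩⟩
  have hmemb : ∀ x : ↥(Metric.closedBall (0 : BoundedContinuousFunction ℕ ℝ) M),
      ∀ n : ℕ, |(x : BoundedContinuousFunction ℕ ℝ) n| ≤ M := by
    intro x n
    have h1 : ‖(x : BoundedContinuousFunction ℕ ℝ)‖ ≤ M := by
      have := x.2
      rwa [Metric.mem_closedBall, dist_zero_right] at this
    have h2 := (x : BoundedContinuousFunction ℕ ℝ).norm_coe_le_norm n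
    rw [Real.norm_eq_abs] at h2
    exact h2.trans h1
  have hPhiB : ∀ z : ℕ → ℝ, (∀ m, |z m| ≤ M) → ∀ n, ‖Phi r a b q σ f τ k z n‖ ≤ M := by
    intro z hz n
    rw [Real.norm_eq_abs]
    unfold Phi
    have hmk : k ≤ max n k := le_max_right _ _
    have h1 : |(-(q (max n k))) * z (max n k - τ)| ≤ qstar * M := by
      rw [abs_mul, abs_neg]
      exact mul_le_mul (hq _) (hz _) (abs_nonneg _) hq0
    have h2 : |SS r a b σ f z (max n k)| ≤ C * AA r a (max n k) + AA r b (max n k) :=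
      SS_bound ha hb hsa' hsb' hC hz _
    have h3 : AA r a (max n k) ≤ AA r a k := AA_mono hsa' hmk
    have h4 : AA r b (max n k) ≤ AA r b k := AA_mono hsb' hmk
    have h5 : C * AA r a (max n k) ≤ C * AA r a k := mul_le_mul_of_nonneg_left h3 hC0
    calc |(-(q (max n k))) * z (max n k - τ) + SS r a b σ f z (max n k)|
        ≤ |(-(q (max n k))) * z (max n k - τ)| + |SS r a b σ f z (max n k)| := abs_add_le _ _
      _ ≤ qstar * M + (1 - qstar) * M := by linarith
      _ = M := by ring
  obtain ⟨Φ, hΦ⟩ : ∃ Φ : ↥(Metric.closedBall (0 : BoundedContinuousFunction ℕ ℝ) M) →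
      ↥(Metric.closedBall (0 : BoundedContinuousFunction ℕ ℝ) M),
      ∀ x n, ((Φ x : BoundedContinuousFunction ℕ ℝ) n)
        = Phi r a b q σ f τ k (⇑(x : BoundedContinuousFunction ℕ ℝ)) n := by
    refine ⟨fun x => ⟨BoundedContinuousFunction.ofNormedAddCommGroup
      (Phi r a b q σ f τ k (⇑(x : BoundedContinuousFunction ℕ ℝ)))
      continuous_of_discreteTopology M (hPhiB _ (hmemb x)), ?_⟩, fun x n => rfl⟩
    rw [Metric.mem_closedBall, dist_zero_right]
    exact (BoundedContinuousFunction.norm_le hM.le).2 (hPhiB _ (hmemb x))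
  set c : NNReal := ⟨(1 + qstar)/2, by linarith⟩ with hcdef
  have hcoeC : (c : ℝ) = (1 + qstar)/2 := rfl
  have hc1 : c < 1 := by
    rw [← NNReal.coe_lt_coe, hcoeC, NNReal.coe_one]
    linarith
  have hcontr : ContractingWith c Φ := by
    refine ⟨hc1, LipschitzWith.of_dist_le_mul ?_⟩
    intro x y
    rw [Subtype.dist_eq]
    have hcM : (0:ℝ) ≤ (c:ℝ) * dist x y := mul_nonneg c.coe_nonneg dist_nonneg
    refine (BoundedContinuousFunction.dist_le hcM).2 ?_
    intro n
    have hzx : ∀ m, |(x : BoundedContinuousFunction ℕ ℝ) m| ≤ M := hmemb x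
    have hzy : ∀ m, |(y : BoundedContinuousFunction ℕ ℝ) m| ≤ M := hmemb y
    have hd0 : (0:ℝ) ≤ dist x y := dist_nonneg
    have hdm : ∀ m, |(x : BoundedContinuousFunction ℕ ℝ) m
        - (y : BoundedContinuousFunction ℕ ℝ) m| ≤ dist x y := by
      intro m
      have h1 := BoundedContinuousFunction.dist_coe_le_dist
        (f := (x : BoundedContinuousFunction ℕ ℝ)) (g := (y : BoundedContinuousFunction ℕ ℝ)) m
      rw [Real.dist_eq] at h1
      rw [Subtype.dist_eq]
      exact h1
    rw [Real.dist_eq, hΦ x n, hΦ y n]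
    unfold Phi
    have hmk : k ≤ max n k := le_max_right _ _
    have key : (-(q (max n k)) * (x : BoundedContinuousFunction ℕ ℝ) (max n k - τ)
          + SS r a b σ f (⇑(x : BoundedContinuousFunction ℕ ℝ)) (max n k))
        - (-(q (max n k)) * (y : BoundedContinuousFunction ℕ ℝ) (max n k - τ)
          + SS r a b σ f (⇑(y : BoundedContinuousFunction ℕ ℝ)) (max n k))
        = -(q (max n k)) * ((x : BoundedContinuousFunction ℕ ℝ) (max n k - τ)
            - (y : BoundedContinuousFunction ℕ ℝ) (max n k - τ))
          + (SS r a b σ f (⇑(x : BoundedContinuousFunction ℕ ℝ)) (max n k)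
            - SS r a b σ f (⇑(y : BoundedContinuousFunction ℕ ℝ)) (max n k)) := by ring
    rw [key]
    have h1 : |(-(q (max n k))) * ((x : BoundedContinuousFunction ℕ ℝ) (max n k - τ)
        - (y : BoundedContinuousFunction ℕ ℝ) (max n k - τ))| ≤ qstar * dist x y := by
      rw [abs_mul, abs_neg]
      exact mul_le_mul (hq _) (hdm _) (abs_nonneg _) hq0
    have h2 : |SS r a b σ f (⇑(x : BoundedContinuousFunction ℕ ℝ)) (max n k)
        - SS r a b σ f (⇑(y : BoundedContinuousFunction ℕ ℝ)) (max n k)|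
        ≤ (Kr * dist x y) * AA r a (max n k) :=
      SS_lip ha hb hsa' hsb' hC hLip hK0 hd0 hzx hzy hdm _
    have h3 : (Kr * dist x y) * AA r a (max n k) ≤ (Kr * dist x y) * AA r a k :=
      mul_le_mul_of_nonneg_left (AA_mono hsa' hmk) (mul_nonneg hK0 hd0)
    have h4 : (Kr * dist x y) * AA r a k = (Kr * AA r a k) * dist x y := by ring
    have h5 : (Kr * AA r a k) * dist x y ≤ ((1 - qstar)/2) * dist x y :=
      mul_le_mul_of_nonneg_right hkK.le hd0
    calc |(-(q (max n k))) * ((x : BoundedContinuousFunction ℕ ℝ) (max n k - τ)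
          - (y : BoundedContinuousFunction ℕ ℝ) (max n k - τ))
          + (SS r a b σ f (⇑(x : BoundedContinuousFunction ℕ ℝ)) (max n k)
            - SS r a b σ f (⇑(y : BoundedContinuousFunction ℕ ℝ)) (max n k))|
        ≤ |(-(q (max n k))) * ((x : BoundedContinuousFunction ℕ ℝ) (max n k - τ)
          - (y : BoundedContinuousFunction ℕ ℝ) (max n k - τ))|
          + |SS r a b σ f (⇑(x : BoundedContinuousFunction ℕ ℝ)) (max n k)
            - SS r a b σ f (⇑(y : BoundedContinuousFunction ℕ ℝ)) (max n k)| := abs_add_le _ _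
      _ ≤ (c : ℝ) * dist x y := by rw [hcoeC]; linarith
  set x0 := ContractingWith.fixedPoint Φ hcontr with hx0
  have hfix : Φ x0 = x0 := hcontr.fixedPoint_isFixedPt
  set xs : ℕ → ℝ := ⇑((x0 : BoundedContinuousFunction ℕ ℝ)) with hxsdef
  have hz : ∀ m, |xs m| ≤ M := hmemb x0
  have hfixpt : ∀ n, Phi r a b q σ f τ k xs n = xs n := by
    intro n
    rw [← hΦ x0 n, hfix]
  refine ⟨xs, ⟨M, fun n _ => hz n⟩, ?_⟩
  intro n hn
  have he : ∀ m, k ≤ m → xs m + q m * xs (m - τ) = SS r a b σ f xs m := by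
    intro m hm
    have h0 := hfixpt m
    unfold Phi at h0
    rw [max_eq_left hm] at h0
    linarith
  rw [he n hn, he (n+1) (by omega), he (n+2) (by omega)]
  have h1 : SS r a b σ f xs n = uu r a b σ f xs n + SS r a b σ f xs (n+1) :=
    SS_rec ha hb hsa' hsb' hC hz n
  have h2 : SS r a b σ f xs (n+1) = uu r a b σ f xs (n+1) + SS r a b σ f xs (n+2) := by
    have h := SS_rec (σ := σ) ha hb hsa' hsb' hC hz (n+1)
    have hnn : n + 1 + 1 = n + 2 := by omega
    rwa [hnn] at h
  have hG : GG a b σ f xs n = gg a b σ f xs n + GG a b σ f xs (n+1) :=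
    GG_rec ha hb hC hz n
  have hu1 : uu r a b σ f xs (n+1) = (1 / r (n+1)) * GG a b σ f xs (n+1) := rfl
  have hu0 : uu r a b σ f xs n = (1 / r n) * GG a b σ f xs n := rfl
  have e1 : r (n+1) * (SS r a b σ f xs (n+2) - SS r a b σ f xs (n+1))
      = -(GG a b σ f xs (n+1)) := by
    rw [h2, hu1]
    field_simp [hr (n+1)]
    ring
  have e2 : r n * (SS r a b σ f xs (n+1) - SS r a b σ f xs n)
      = -(GG a b σ f xs n) := by
    rw [h1, hu0]
    field_simp [hr n]
    ring
  have hggn : gg a b σ f xs n = a n * f (xs ((n : ℤ) - σ).toNat) + b n := rfl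
  rw [← hggn]
  linarith [e1, e2, hG]
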